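/- Let T be a finite tree with vertex set C having at least one non-leaf vertex, let r be a non-leaf vertex of T, and let L ⊆ C be the set of leaves of T. Let ≻ be any linear order on C such that (i) every non-leaf vertex is preferred under ≻ to every leaf, and (ii) for all non-leaf vertices x, y, if d(r, x) < d(r, y) then x ≻ y (where d is the graph distance in T). Then ≻ is single-peaked on T. -/

import Mathlib

/-- `x` appears strictly before `y` in the list `l`. -/
def listBefore {V : Type*} (l : List V) (x y : V) : Prop :=
  ∃ i j : Fin l.length, i < j ∧ l.get i = x ∧ l.get j = y

/-- The restriction of `r` to the finite set `X` is single peaked with respect to the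
restriction of `r'` to `X`. -/
def SinglePeakedOn {V : Type*} (X : Finset V) (r r' : V → V → Prop) : Prop :=
  ∀ p ∈ X, (∀ x ∈ X, x ≠ p → r p x) →
    ∀ x ∈ X, ∀ y ∈ X, ((r' p x ∧ r' x y) ∨ (r' y x ∧ r' x p)) → r x y

/-- A linear order `r` on the vertex set of `G` is single peaked on the tree `G`. -/
def SinglePeakedOnTree {V : Type*} [DecidableEq V] (G : SimpleGraph V)
    (r : V → V → Prop) : Prop :=
  ∀ l : List V, l.Nodup → l.Chain' G.Adj →
    SinglePeakedOn l.toFinset r (listBefore l)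

section Auxiliary

lemma aux_mono (U : ℕ → Prop) (n : ℕ) (hup : ∀ i, i + 2 < n → U i → U (i + 1)) :
    ∀ s t, s ≤ t → t + 1 < n → U s → U t := by
  intro s t hst
  induction t, hst using Nat.le_induction with
  | base => exact fun _ h => h
  | succ t ht ih => exact fun hb hU => hup t (by omega) (ih (by omega) hU)

lemma aux_incr (d : ℕ → ℕ) :
    ∀ (k a : ℕ), (∀ s, a ≤ s → s < a + k → d (s + 1) = d s + 1) → d a + k = d (a + k) := by
  intro k
  induction k with
  | zero => intro a _; simp
  | succ k ih =>
    intro a h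
    have h1 := ih a (fun s hs1 hs2 => h s hs1 (by omega))
    have h2 := h (a + k) (by omega) (by omega)
    show d a + (k + 1) = d (a + k + 1)
    linarith

lemma aux_decr (d : ℕ → ℕ) :
    ∀ (k a : ℕ), (∀ s, a ≤ s → s < a + k → d s = d (s + 1) + 1) → d (a + k) + k = d a := by
  intro k
  induction k with
  | zero => intro a _; simp
  | succ k ih =>
    intro a h
    have h1 := ih a (fun s hs1 hs2 => h s hs1 (by omega))
    have h2 := h (a + k) (by omega) (by omega)
    show d (a + k + 1) + (k + 1) = d a
    linarith

variable {V : Type*} [DecidableEq V] {G : SimpleGraph V}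

omit [DecidableEq V] in
lemma two_nbrs_deg [Fintype V] [DecidableRel G.Adj] {v w₁ w₂ : V}
    (h₁ : G.Adj v w₁) (h₂ : G.Adj v w₂) (hne : w₁ ≠ w₂) : G.degree v ≠ 1 := by
  intro hdeg
  have : 1 < G.degree v :=
    Finset.one_lt_card.mpr ⟨w₁, by simp [h₁], w₂, by simp [h₂], hne⟩
  omega

/-- In a tree, adjacent vertices have distances to `root` differing by exactly one. -/
lemma tree_adj_dist (hT : G.IsTree) (root : V) {u v : V} (h : G.Adj u v) :
    G.dist root v = G.dist root u + 1 ∨ G.dist root u = G.dist root v + 1 := by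
  have hc := hT.isConnected
  have hne : G.dist root u ≠ G.dist root v := by
    intro heq
    obtain ⟨P, hP, hPl⟩ := hc.exists_path_of_dist root v
    by_cases hu : u ∈ P.support
    · -- split P at u
      have h1 : (P.takeUntil u hu).IsPath := hP.takeUntil hu
      have h2 : (P.dropUntil u hu).IsPath := hP.dropUntil hu
      have hlen : (P.takeUntil u hu).length + (P.dropUntil u hu).length = P.length := by
        rw [← SimpleGraph.Walk.length_append, P.take_spec hu]
      -- the drop part is a path from u to v, as is the single edge
      have hedge : (SimpleGraph.Walk.cons h SimpleGraph.Walk.nil : G.Walk u v).IsPath := by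
        simp [SimpleGraph.Walk.cons_isPath_iff, h.ne]
      have := hT.IsAcyclic.path_unique ⟨P.dropUntil u hu, h2⟩ ⟨_, hedge⟩
      have hd1 : (P.dropUntil u hu).length = 1 := by
        have := congrArg (fun q : G.Path u v => q.1.length) this
        simpa using this
      -- take part is a path root → u, and so is the shortest one
      obtain ⟨Q, hQ, hQl⟩ := hc.exists_path_of_dist root u
      have := hT.IsAcyclic.path_unique ⟨P.takeUntil u hu, h1⟩ ⟨Q, hQ⟩
      have hd2 : (P.takeUntil u hu).length = Q.length := by
        have := congrArg (fun q : G.Path root u => q.1.length) this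
        simpa using this
      omega
    · -- extend P by the edge v → u
      have hP' : (P.concat h.symm).IsPath := by
        rw [← SimpleGraph.Walk.isPath_reverse_iff, SimpleGraph.Walk.reverse_concat]
        rw [SimpleGraph.Walk.cons_isPath_iff]
        refine ⟨hP.reverse, ?_⟩
        simpa using hu
      obtain ⟨Q, hQ, hQl⟩ := hc.exists_path_of_dist root u
      have := hT.IsAcyclic.path_unique ⟨P.concat h.symm, hP'⟩ ⟨Q, hQ⟩
      have hd2 : (P.concat h.symm).length = Q.length := by
        have := congrArg (fun q : G.Path root u => q.1.length) this
        simpa using this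
      rw [SimpleGraph.Walk.length_concat] at hd2
      omega
  have ht1 : G.dist root v ≤ G.dist root u + 1 := by
    have := hc.dist_triangle (u := root) (v := u) (w := v)
    rwa [(SimpleGraph.dist_eq_one_iff_adj).mpr h] at this
  have ht2 : G.dist root u ≤ G.dist root v + 1 := by
    have := hc.dist_triangle (u := root) (v := v) (w := u)
    rwa [(SimpleGraph.dist_eq_one_iff_adj).mpr h.symm] at this
  omega

omit [DecidableEq V] in
/-- In a tree, a vertex has a unique neighbour strictly closer to the root. -/
lemma tree_parent_unique (hT : G.IsTree) (root : V) {v u₁ u₂ : V}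
    (h₁ : G.Adj u₁ v) (h₂ : G.Adj u₂ v)
    (hd₁ : G.dist root u₁ + 1 = G.dist root v) (hd₂ : G.dist root u₂ + 1 = G.dist root v) :
    u₁ = u₂ := by
  have hc := hT.isConnected
  obtain ⟨P₁, hP₁, hl₁⟩ := hc.exists_path_of_dist root u₁
  obtain ⟨P₂, hP₂, hl₂⟩ := hc.exists_path_of_dist root u₂
  have hQ₁ : (P₁.concat h₁).IsPath := by
    apply SimpleGraph.Walk.isPath_of_length_eq_dist
    rw [SimpleGraph.Walk.length_concat, hl₁, hd₁]
  have hQ₂ : (P₂.concat h₂).IsPath := by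
    apply SimpleGraph.Walk.isPath_of_length_eq_dist
    rw [SimpleGraph.Walk.length_concat, hl₂, hd₂]
  have heq := hT.IsAcyclic.path_unique ⟨P₁.concat h₁, hQ₁⟩ ⟨P₂.concat h₂, hQ₂⟩
  have heq' : (P₁.concat h₁) = (P₂.concat h₂) := congrArg Subtype.val heq
  have := congrArg (fun q : G.Walk root v => q.reverse.getVert 1) heq'
  simpa [SimpleGraph.Walk.reverse_concat] using this

lemma listBefore_reverse {V : Type*} {l : List V} {x y : V} (h : listBefore l x y) :
    listBefore l.reverse y x := by
  obtain ⟨i, j, hij, hi, hj⟩ := h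
  have hij' : i.1 < j.1 := hij
  have hi' : i.1 < l.length := i.2
  have hj' : j.1 < l.length := j.2
  have hlen : l.reverse.length = l.length := l.length_reverse
  refine ⟨⟨l.length - 1 - j.1, by omega⟩, ⟨l.length - 1 - i.1, by omega⟩,
    by simp [Fin.lt_def]; omega, ?_, ?_⟩
  · rw [List.get_eq_getElem]
    simp only [List.getElem_reverse]
    rw [← hj, List.get_eq_getElem]
    congr 1
    omega
  · rw [List.get_eq_getElem]
    simp only [List.getElem_reverse]
    rw [← hi, List.get_eq_getElem]
    congr 1
    omega

set_option maxHeartbeats 1000000 in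
lemma main_before {V : Type*} [Fintype V] [DecidableEq V] (G : SimpleGraph V)
    [DecidableRel G.Adj]
    (hT : G.IsTree) (root : V)
    (succ : V → V → Prop) (hsto : IsStrictTotalOrder V succ)
    (hleaf : ∀ x y : V, G.degree x ≠ 1 → G.degree y = 1 → succ x y)
    (hlevel : ∀ x y : V, G.degree x ≠ 1 → G.degree y ≠ 1 →
      G.dist root x < G.dist root y → succ x y)
    (l : List V) (hnd : l.Nodup) (hch : l.Chain' G.Adj)
    (p : V) (hpeak : ∀ z ∈ l.toFinset, z ≠ p → succ p z)
    (x y : V) (h1 : listBefore l p x) (h2 : listBefore l x y) : succ x y := by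
  obtain ⟨a, b, hab, ha, hb⟩ := h1
  obtain ⟨c, e, hce, hc, he⟩ := h2
  have hinj : Function.Injective l.get := List.nodup_iff_injective_get.mp hnd
  have hbc : b = c := hinj (hb.trans hc.symm)
  subst hbc
  have hasym : ∀ u w : V, succ u w → succ w u → False := fun u w h1 h2 =>
    hsto.irrefl u (hsto.trans _ _ _ h1 h2)
  have hab' : a.1 < b.1 := hab
  have hbe' : b.1 < e.1 := hce
  have he' : e.1 < l.length := e.2
  have hn0 : 0 < l.length := lt_of_le_of_lt (Nat.zero_le _) a.2
  have hmin : ∀ i : ℕ, min i (l.length - 1) < l.length := fun i => by omega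
  -- adjacency along the path
  have hadj : ∀ (i : ℕ) (h : i + 1 < l.length),
      G.Adj (l.get ⟨i, by omega⟩) (l.get ⟨i + 1, h⟩) :=
    fun i h => List.isChain_iff_getElem.mp hch i (by omega)
  -- distances along the path
  set d : ℕ → ℕ := fun i => G.dist root (l.get ⟨min i (l.length - 1), hmin i⟩) with hd
  have dge : ∀ (i : ℕ) (h : i < l.length), d i = G.dist root (l.get ⟨i, h⟩) := by
    intro i h
    simp only [hd]
    exact congrArg (fun j => G.dist root (l.get j)) (Fin.mk_eq_mk.mpr (by omega))
  set U : ℕ → Prop := fun i => d (i + 1) = d i + 1 with hU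
  have step : ∀ (i : ℕ), i + 1 < l.length → (U i ∨ d i = d (i + 1) + 1) := by
    intro i h
    simp only [hU]
    rw [dge i (by omega), dge (i + 1) h]
    exact tree_adj_dist hT root (hadj i h)
  have upstep : ∀ (i : ℕ), i + 2 < l.length → U i → U (i + 1) := by
    intro i h hu
    have h1 : i + 1 < l.length := Nat.lt_of_succ_lt h
    have h0 : i < l.length := Nat.lt_of_succ_lt h1
    rcases step (i + 1) h with h' | h'
    · exact h'
    · exfalso
      simp only [hU] at hu
      rw [dge i h0, dge (i + 1) h1] at hu
      rw [dge (i + 1) h1, dge (i + 1 + 1) h] at h'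
      have heq := tree_parent_unique hT root (hadj i h1)
        (hadj (i + 1) h).symm hu.symm h'.symm
      clear hu h'
      have := congrArg Fin.val (hinj heq)
      simp only [Fin.val_mk] at this
      omega
  -- interior vertices are not leaves
  have interior : ∀ (i : ℕ), 0 < i → ∀ (h : i + 1 < l.length),
      G.degree (l.get ⟨i, by omega⟩) ≠ 1 := by
    intro i h0 h
    obtain ⟨j, rfl⟩ : ∃ j, i = j + 1 := ⟨i - 1, by omega⟩
    refine two_nbrs_deg (hadj j (by omega)).symm (hadj (j + 1) h) ?_
    intro hh
    have := congrArg Fin.val (hinj hh)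
    simp only [Fin.val_mk] at this
    omega
  have hdegx : G.degree x ≠ 1 := by
    rw [← hb]
    exact interior b.1 (by omega) (by omega)
  by_cases hy : G.degree y = 1
  · exact hleaf x y hdegx hy
  · have hxp : x ≠ p := by
      intro hxp
      have : a = b := hinj (by rw [ha, hb, hxp])
      have := congrArg Fin.val this
      omega
    have hdegp : G.degree p ≠ 1 := by
      intro hdp
      exact hasym x p (hleaf x p hdegx hdp)
        (hpeak x (List.mem_toFinset.mpr (hb ▸ l.get_mem b)) hxp)
    by_cases hall : ∀ s, b.1 ≤ s → s < e.1 → U s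
    · -- distances increase from x to y
      have hbk : b.1 + (e.1 - b.1) = e.1 := by omega
      have hkb : 1 ≤ e.1 - b.1 := by omega
      have hk := aux_incr d (e.1 - b.1) b.1 (fun s hs1 hs2 => hall s hs1 (by omega))
      rw [hbk] at hk
      rw [dge b.1 b.2, dge e.1 he', hb, he] at hk
      exact hlevel x y hdegx hy (by linarith)
    · push_neg at hall
      obtain ⟨t, htb, hte, htU⟩ := hall
      have hta : a.1 ≤ t := by omega
      have htn : t + 1 < l.length := by omega
      have hak : a.1 + (t + 1 - a.1) = t + 1 := by omega
      have hk1 : 1 ≤ t + 1 - a.1 := by omega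
      have hte' : t + 1 ≤ e.1 := by omega
      have hnotU : ∀ s, s ≤ t → ¬ U s := fun s hs hU' =>
        htU (aux_mono U l.length upstep s t hs (by omega) hU')
      have hdec := aux_decr d (t + 1 - a.1) a.1 (fun s hs1 hs2 => by
        rcases step s (by omega) with h' | h'
        · exact absurd h' (hnotU s (by omega))
        · exact h')
      rw [hak] at hdec
      set w := l.get ⟨t + 1, htn⟩ with hw
      have hwp : w ≠ p := by
        intro hwp
        have h2 : (⟨t + 1, htn⟩ : Fin l.length) = a := hinj (by rw [← hw, hwp, ha])
        have h3 := congrArg Fin.val h2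
        simp only [Fin.val_mk] at h3
        exact Nat.lt_irrefl t (by
          calc t < t + 1 := Nat.lt_succ_self t
            _ = a.1 := h3
            _ ≤ t := hta)
      have hdegw : G.degree w ≠ 1 := by
        rcases eq_or_lt_of_le hte' with h | h
        · have hwy : w = y := by
            rw [hw, ← he]
            exact congrArg l.get (Fin.ext h)
          rw [hwy]; exact hy
        · exact interior (t + 1) (Nat.succ_pos t)
            (lt_of_le_of_lt (Nat.succ_le_of_lt h) he')
      rw [dge (t + 1) htn, dge a.1 a.2, ha, ← hw] at hdec
      have hdw : G.dist root w < G.dist root p := by linarith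
      exact (hasym w p (hlevel w p hdegw hdegp hdw)
        (hpeak w (List.mem_toFinset.mpr (hw ▸ l.get_mem ⟨t + 1, htn⟩)) hwp)).elim

end Auxiliary

/-- Let `root` be a non-leaf vertex of a finite tree `G`.  Any linear order on the
vertices which (i) prefers every non-leaf vertex to every leaf and (ii) among non-leaf
vertices prefers vertices closer to `root`, is single peaked on the tree. -/
theorem levelOrder_leavesLast_singlePeaked_on_tree
    {V : Type*} [Fintype V] [DecidableEq V] (G : SimpleGraph V) [DecidableRel G.Adj]
    (hT : G.IsTree) (root : V) (hroot : G.degree root ≠ 1)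
    (succ : V → V → Prop) (hsto : IsStrictTotalOrder V succ)
    (hleaf : ∀ x y : V, G.degree x ≠ 1 → G.degree y = 1 → succ x y)
    (hlevel : ∀ x y : V, G.degree x ≠ 1 → G.degree y ≠ 1 →
      G.dist root x < G.dist root y → succ x y) :
    SinglePeakedOnTree G succ := by
  intro l hnd hch p _hp hpeak x _hx y _hy hcase
  rcases hcase with ⟨h1, h2⟩ | ⟨h1, h2⟩
  · exact main_before G hT root succ hsto hleaf hlevel l hnd hch p hpeak x y h1 h2
  · have hnd' : l.reverse.Nodup := List.nodup_reverse.mpr hnd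
    have hch' : l.reverse.Chain' G.Adj := by
      refine List.isChain_reverse.mpr ?_
      exact List.IsChain.imp (fun a b hab => hab.symm) hch
    have hpeak' : ∀ z ∈ l.reverse.toFinset, z ≠ p → succ p z := by
      intro z hz
      exact hpeak z (by rwa [List.toFinset_reverse] at hz)
    exact main_before G hT root succ hsto hleaf hlevel l.reverse hnd' hch' p hpeak'
      x y (listBefore_reverse h2) (listBefore_reverse h1)
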